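/- For every ε ∈ (0, 2(1 − (B/(1+B))^{1/N})] and every real s ≥ s_{ε/2}, one has g(s)^{2α} / (2α)^{1/N} ≥ (1 − ε/2)·(s − s_{ε/2}). -/

import Mathlib

open Real Filter Set

private lemma rpow_deriv_identity (N : ℕ) (hNR : (0:ℝ) < (N:ℝ)) (P x : ℝ) (hP : 1 < P) (hx : 0 < x) :
    P * x ^ (P - 1) * (1 + P ^ ((N : ℝ) - 1) * x ^ ((N : ℝ) * (P - 1))) ^ (-(1 / (N : ℝ)))
    = P ^ ((1:ℝ)/N) * ((P ^ ((N : ℝ) - 1) * x ^ ((N : ℝ) * (P - 1))) /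
        (1 + P ^ ((N : ℝ) - 1) * x ^ ((N : ℝ) * (P - 1)))) ^ ((1:ℝ)/N) := by
  have hP0 : 0 < P := by linarith
  have hNne : (N:ℝ) ≠ 0 := hNR.ne'
  set u : ℝ := P ^ ((N : ℝ) - 1) * x ^ ((N : ℝ) * (P - 1)) with hu
  have hu0 : 0 < u := by positivity
  have h1u : 0 < 1 + u := by linarith
  rw [Real.div_rpow hu0.le h1u.le, Real.rpow_neg h1u.le]
  have huN : u ^ ((1:ℝ)/N) = P ^ (((N:ℝ) - 1)/N) * x ^ (P - 1) := by
    rw [hu, Real.mul_rpow (by positivity) (by positivity),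
      ← Real.rpow_mul hP0.le, ← Real.rpow_mul hx.le]
    congr 1
    · congr 1; field_simp
    · congr 1; field_simp
  rw [huN]
  have hPP : P ^ ((1:ℝ)/N) * P ^ (((N:ℝ) - 1)/N) = P := by
    have he : (1:ℝ)/N + ((N:ℝ)-1)/N = 1 := by field_simp; ring
    rw [← Real.rpow_add hP0, he, Real.rpow_one]
  field_simp
  rw [hPP]

theorem g_integrated_estimate (N : ℕ) (hN : 2 ≤ N) (α : ℝ) (hα : 1 / 2 < α)
    (g : ℝ → ℝ) (hg_diff : Differentiable ℝ g) (hg_zero : g 0 = 0)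
    (hg_odd : ∀ t : ℝ, g (-t) = -g t)
    (hg_deriv : ∀ t : ℝ, deriv g t =
      (1 + (2 * α) ^ ((N : ℝ) - 1) * |g t| ^ ((N : ℝ) * (2 * α - 1))) ^ (-(1 / (N : ℝ))))
    (B : ℝ) (hB : B = (2 * α) ^ ((N : ℝ) - 1) * (g 1) ^ ((2 * α - 1) * (N : ℝ)))
    (s_ : ℝ → ℝ) (hs_ : ∀ δ : ℝ, s_ δ =
      ((1 - δ) ^ (N : ℝ) / ((1 - (1 - δ) ^ (N : ℝ)) * B)) ^ (2 * α / ((2 * α - 1) * (N : ℝ))))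
    : ∀ ε : ℝ, 0 < ε → ε ≤ 2 * (1 - (B / (1 + B)) ^ ((1 : ℝ) / (N : ℝ))) →
      ∀ s : ℝ, s_ (ε / 2) ≤ s →
        (1 - ε / 2) * (s - s_ (ε / 2)) ≤ (g s) ^ (2 * α) / (2 * α) ^ ((1 : ℝ) / (N : ℝ)) := by
  have hNR : (0:ℝ) < (N:ℝ) := by positivity
  have hNne : (N:ℝ) ≠ 0 := hNR.ne'
  set P : ℝ := 2 * α with hPdef
  have hP : 1 < P := by simp only [hPdef]; linarith
  have hP0 : 0 < P := by linarith
  have hP1 : 0 < P - 1 := by linarith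
  -- derivative positive
  have hbase : ∀ t, 1 ≤ 1 + P ^ ((N : ℝ) - 1) * |g t| ^ ((N : ℝ) * (P - 1)) := by
    intro t
    have : 0 ≤ P ^ ((N : ℝ) - 1) * |g t| ^ ((N : ℝ) * (P - 1)) := by positivity
    linarith
  have hgd_pos : ∀ t, 0 < deriv g t := by
    intro t
    rw [hg_deriv t]
    have := hbase t
    positivity
  have hg_mono : StrictMono g :=
    strictMono_of_deriv_pos hgd_pos
  have hgt_pos : ∀ t : ℝ, 0 < t → 0 < g t := by
    intro t ht
    have := hg_mono ht
    rwa [hg_zero] at this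
  have hg1 : 0 < g 1 := hgt_pos 1 one_pos
  -- the function h and its derivative D
  set u : ℝ → ℝ := fun t => P ^ ((N : ℝ) - 1) * (g t) ^ ((N : ℝ) * (P - 1)) with hu_def
  set h : ℝ → ℝ := fun t => (g t) ^ P with hh_def
  set D : ℝ → ℝ := fun t => P ^ ((1:ℝ)/N) * (u t / (1 + u t)) ^ ((1:ℝ)/N) with hD_def
  have hu_pos : ∀ t : ℝ, 0 < t → 0 < u t := by
    intro t ht
    have := hgt_pos t ht
    simp only [hu_def]
    positivity
  have hcont : Continuous h := by
    apply hg_diff.continuous.rpow_const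
    intro x; right; positivity
  have hderiv : ∀ t : ℝ, 0 < t → HasDerivAt h (D t) t := by
    intro t ht
    have hx := hgt_pos t ht
    have H := (Real.hasDerivAt_rpow_const (p := P) (Or.inl hx.ne')).comp t (hg_diff t).hasDerivAt
    have hEq : D t = P * g t ^ (P - 1) * deriv g t := by
      rw [hg_deriv t, abs_of_pos hx, rpow_deriv_identity N hNR P (g t) hP hx]
    rw [hEq]
    exact H
  have hD_mono : ∀ t₁ t₂ : ℝ, 0 < t₁ → t₁ ≤ t₂ → D t₁ ≤ D t₂ := by
    intro t₁ t₂ h1 h12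
    have hb1 := hgt_pos _ h1
    have hu1 := hu_pos _ h1
    have hu2 := hu_pos _ (lt_of_lt_of_le h1 h12)
    have hu12 : u t₁ ≤ u t₂ := by
      simp only [hu_def]
      exact mul_le_mul_of_nonneg_left
        (Real.rpow_le_rpow hb1.le (hg_mono.monotone h12) (by positivity)) (by positivity)
    have hq : u t₁ / (1 + u t₁) ≤ u t₂ / (1 + u t₂) := by
      rw [div_le_div_iff₀ (by linarith) (by linarith)]
      nlinarith
    simp only [hD_def]
    exact mul_le_mul_of_nonneg_left
      (Real.rpow_le_rpow (by positivity) hq (by positivity)) (by positivity)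
  -- h 1 ≤ D 1
  have hh1_le : h 1 ≤ D 1 := by
    obtain ⟨c, hc, hDc⟩ := exists_hasDerivAt_eq_slope h D one_pos hcont.continuousOn
      (fun x hx => hderiv x hx.1)
    have h0 : h 0 = 0 := by
      simp only [hh_def, hg_zero]
      exact Real.zero_rpow (by linarith)
    have : h 1 = D c := by rw [hDc, h0]; ring
    rw [this]
    exact hD_mono c 1 hc.1 hc.2.le
  -- linear lower bound for h on [1, ∞)
  have hh_lin : ∀ t : ℝ, 1 ≤ t → h 1 * t ≤ h t := by
    intro t ht
    rcases eq_or_lt_of_le ht with rfl | ht1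
    · simp
    obtain ⟨c, hc, hDc⟩ := exists_hasDerivAt_eq_slope h D ht1 hcont.continuousOn
      (fun x hx => hderiv x (lt_trans one_pos hx.1))
    have hD1c : D 1 ≤ D c := hD_mono 1 c one_pos hc.1.le
    have hslope : h 1 ≤ (h t - h 1) / (t - 1) := by
      rw [← hDc]; exact le_trans hh1_le hD1c
    have htpos : 0 < t - 1 := by linarith
    rw [le_div_iff₀ htpos] at hslope
    nlinarith
  -- now the main part
  intro ε hε hεle s hs
  set δ : ℝ := ε / 2 with hδ_def
  have hBpos : 0 < B := by rw [hB]; positivity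
  have h1B : 0 < 1 + B := by linarith
  have hrpos : 0 < (B/(1+B)) ^ ((1:ℝ)/N) := by positivity
  have hδ0 : 0 < δ := by positivity
  have hδle : δ ≤ 1 - (B/(1+B)) ^ ((1:ℝ)/N) := by
    simp only [hδ_def]; linarith
  have h1δ : 0 < 1 - δ := by linarith
  set p : ℝ := (1 - δ) ^ (N:ℝ) with hp_def
  have hppos : 0 < p := by positivity
  have hplt : p < 1 := Real.rpow_lt_one h1δ.le (by linarith) hNR
  have hden : 0 < 1 - p := by linarith
  set C : ℝ := p / (1 - p) with hC_def
  have hCpos : 0 < C := by positivity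
  -- B ≤ C
  have hBC : B ≤ C := by
    have h2 : (B/(1+B)) ^ ((1:ℝ)/N) ≤ 1 - δ := by linarith
    have h1 : B/(1+B) ≤ p := by
      calc B/(1+B) = ((B/(1+B)) ^ ((1:ℝ)/N)) ^ (N:ℝ) := by
            rw [← Real.rpow_mul (by positivity), one_div, inv_mul_cancel₀ hNne, Real.rpow_one]
        _ ≤ p := Real.rpow_le_rpow (by positivity) h2 hNR.le
    rw [div_le_iff₀ h1B] at h1
    rw [hC_def, le_div_iff₀ hden]
    nlinarith
  -- s_ δ = (C/B) ^ e
  have hsδ : s_ δ = (C/B) ^ (P/((P-1)*(N:ℝ))) := by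
    rw [hs_ δ, hC_def, hp_def, div_div]
  have he_pos : 0 < P/((P-1)*(N:ℝ)) := by positivity
  have hCB1 : 1 ≤ C/B := (one_le_div hBpos).mpr hBC
  have hs1 : 1 ≤ s_ δ := by
    rw [hsδ]
    exact Real.one_le_rpow hCB1 he_pos.le
  -- lower bound on u t for t ≥ s_ δ
  set q : ℝ := (N:ℝ) * (P-1) / P with hq_def
  have hq_pos : 0 < q := by positivity
  have hu_ge : ∀ t : ℝ, s_ δ ≤ t → C ≤ u t := by
    intro t hts
    have ht1 : 1 ≤ t := le_trans hs1 hts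
    have htp : 0 < t := by linarith
    have hgt := hgt_pos t htp
    have hht : h 1 * t ≤ h t := hh_lin t ht1
    have hh1pos : 0 < h 1 := by simp only [hh_def]; positivity
    have hut : u t = P ^ ((N:ℝ)-1) * (h t) ^ q := by
      simp only [hu_def, hh_def]
      congr 1
      rw [← Real.rpow_mul hgt.le]
      congr 1
      rw [hq_def]; field_simp; try ring
    have hbd : P ^ ((N:ℝ)-1) * (h 1 * t) ^ q ≤ u t := by
      rw [hut]
      exact mul_le_mul_of_nonneg_left
        (Real.rpow_le_rpow (by positivity) hht hq_pos.le) (by positivity)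
    have hsplit : (h 1 * t) ^ q = (h 1) ^ q * t ^ q :=
      Real.mul_rpow hh1pos.le htp.le
    have hh1q : P ^ ((N:ℝ)-1) * (h 1) ^ q = B := by
      rw [hB]
      simp only [hh_def]
      congr 1
      rw [← Real.rpow_mul hg1.le]
      congr 1
      rw [hq_def]; field_simp; try ring
    have htq : s_ δ ^ q ≤ t ^ q :=
      Real.rpow_le_rpow (by linarith) hts hq_pos.le
    have hsq : s_ δ ^ q = C/B := by
      rw [hsδ, ← Real.rpow_mul (by positivity)]
      have : P/((P-1)*(N:ℝ)) * q = 1 := by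
        rw [hq_def]; field_simp; try ring
      rw [this, Real.rpow_one]
    have hfin : B * (C/B) ≤ u t := by
      calc B * (C/B) = P ^ ((N:ℝ)-1) * (h 1) ^ q * (C/B) := by rw [hh1q]
        _ ≤ P ^ ((N:ℝ)-1) * (h 1) ^ q * t ^ q :=
            mul_le_mul_of_nonneg_left (by rw [← hsq]; exact htq) (by positivity)
        _ = P ^ ((N:ℝ)-1) * ((h 1) ^ q * t ^ q) := by ring
        _ = P ^ ((N:ℝ)-1) * (h 1 * t) ^ q := by rw [hsplit]
        _ ≤ u t := hbd
    rwa [mul_div_cancel₀ C hBpos.ne'] at hfin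
  -- D t is bounded below for t ≥ s_ δ
  have hD_ge : ∀ t : ℝ, s_ δ ≤ t → (1-δ) * P ^ ((1:ℝ)/N) ≤ D t := by
    intro t hts
    have htp : 0 < t := lt_of_lt_of_le (lt_of_lt_of_le one_pos hs1) hts
    have hut := hu_pos t htp
    have hCu := hu_ge t hts
    have hfrac : p ≤ u t / (1 + u t) := by
      rw [le_div_iff₀ (by linarith)]
      have hCp : C * (1 - p) = p := by rw [hC_def, div_mul_cancel₀ _ hden.ne']
      have hmul : C * (1 - p) ≤ u t * (1 - p) := mul_le_mul_of_nonneg_right hCu hden.le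
      linarith [hmul, hCp, mul_pos (hu_pos t htp) hppos]
    have hroot : 1 - δ ≤ (u t / (1 + u t)) ^ ((1:ℝ)/N) := by
      have h1 : (p) ^ ((1:ℝ)/N) ≤ (u t / (1 + u t)) ^ ((1:ℝ)/N) :=
        Real.rpow_le_rpow hppos.le hfrac (by positivity)
      have h2 : p ^ ((1:ℝ)/N) = 1 - δ := by
        rw [hp_def, ← Real.rpow_mul h1δ.le, mul_one_div, div_self hNne, Real.rpow_one]
      linarith
    simp only [hD_def]
    calc (1-δ) * P ^ ((1:ℝ)/N) = P ^ ((1:ℝ)/N) * (1-δ) := by ring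
      _ ≤ P ^ ((1:ℝ)/N) * (u t / (1 + u t)) ^ ((1:ℝ)/N) :=
          mul_le_mul_of_nonneg_left hroot (by positivity)
  -- conclude
  have hPN : 0 < P ^ ((1:ℝ)/N) := by positivity
  rcases eq_or_lt_of_le hs with heq | hlt
  · rw [← heq]
    have hgp : 0 < g (s_ δ) := hgt_pos _ (lt_of_lt_of_le one_pos hs1)
    have : (0:ℝ) ≤ g (s_ δ) ^ P / P ^ ((1:ℝ)/N) := by positivity
    linarith [this]
  · obtain ⟨c, hc, hDc⟩ := exists_hasDerivAt_eq_slope h D hlt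
      hcont.continuousOn
      (fun x hx => hderiv x (lt_of_lt_of_le one_pos (le_trans hs1 hx.1.le)))
    have hDcge := hD_ge c hc.1.le
    have hhsδ : 0 ≤ h (s_ δ) := by
      have := hgt_pos _ (lt_of_lt_of_le one_pos hs1)
      simp only [hh_def]
      positivity
    have hsub : 0 < s - s_ δ := by linarith
    have hkey : (1-δ) * P ^ ((1:ℝ)/N) * (s - s_ δ) ≤ h s - h (s_ δ) := by
      have : h s - h (s_ δ) = D c * (s - s_ δ) := by
        rw [hDc, div_mul_cancel₀ _ hsub.ne']
      rw [this]
      exact mul_le_mul_of_nonneg_right hDcge hsub.le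
    have hgoal : (1 - δ) * (s - s_ δ) ≤ h s / P ^ ((1:ℝ)/N) := by
      rw [le_div_iff₀ hPN]
      linarith [hkey, hhsδ]
    exact hgoal
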